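/- Let η ∈ [0,1]^n with Σ_i η_i = k (k a positive integer) and let m ≤ k. Then the m-th elementary symmetric polynomial satisfies e_m(η) ≥ C(k, m), with equality when exactly k of the η_i equal 1 and the rest are 0. -/

import Mathlib

open Finset

/-- Bernoulli product weight of a subset `T`. -/
noncomputable def Wt {n : ℕ} (η : Fin n → ℝ) (T : Finset (Fin n)) : ℝ :=
  (∏ i ∈ T, η i) * ∏ i ∈ Tᶜ, (1 - η i)

lemma marginal {n : ℕ} (η : Fin n → ℝ) (α : Finset (Fin n)) :
    ∑ T ∈ Finset.univ.powerset.filter (fun T => α ⊆ T), Wt η T = ∏ i ∈ α, η i := by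
  have himg : Finset.univ.powerset.filter (fun T => α ⊆ T)
      = (αᶜ).powerset.image (fun S => α ∪ S) := by
    ext T
    simp only [mem_filter, mem_powerset, mem_image]
    constructor
    · rintro ⟨-, hα⟩
      refine ⟨T \ α, ?_, ?_⟩
      · intro x hx; simp only [mem_sdiff] at hx; simp [hx.2]
      · exact Finset.union_sdiff_of_subset hα
    · rintro ⟨S, -, rfl⟩
      exact ⟨subset_univ _, subset_union_left⟩
  rw [himg, Finset.sum_image]
  · have hterm : ∀ S ∈ (αᶜ).powerset,
        Wt η (α ∪ S) = (∏ i ∈ α, η i) * ((∏ i ∈ S, η i) * ∏ i ∈ αᶜ \ S, (1 - η i)) := by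
      intro S hS
      rw [mem_powerset] at hS
      have hdisj : Disjoint α S := by
        rw [Finset.disjoint_left]
        intro x hx hxS
        have := hS hxS
        simp [hx] at this
      have hc : (α ∪ S)ᶜ = αᶜ \ S := by
        rw [Finset.compl_union]; exact (sdiff_eq).symm
      rw [Wt, Finset.prod_union hdisj, hc]
      ring
    rw [Finset.sum_congr rfl hterm, ← Finset.mul_sum, ← Finset.prod_add]
    simp
  · intro S1 h1 S2 h2 h
    rw [Finset.mem_coe, mem_powerset] at h1 h2
    have key : ∀ S : Finset (Fin n), S ⊆ αᶜ → (α ∪ S) \ α = S := by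
      intro S hS
      rw [Finset.union_sdiff_cancel_left]
      rw [Finset.disjoint_left]
      intro x hx hxS
      have := hS hxS; simp [hx] at this
    rw [← key S1 h1, ← key S2 h2, show α ∪ S1 = α ∪ S2 from h]

lemma Wt_norm {n : ℕ} (η : Fin n → ℝ) :
    ∑ T ∈ (Finset.univ : Finset (Fin n)).powerset, Wt η T = 1 := by
  have := marginal η ∅
  simpa using this

lemma Wt_moment {n : ℕ} (η : Fin n → ℝ) :
    ∑ T ∈ (Finset.univ : Finset (Fin n)).powerset, Wt η T * T.card = ∑ i, η i := by
  have hcard : ∀ T : Finset (Fin n), (T.card : ℝ) = ∑ i : Fin n, if i ∈ T then (1:ℝ) else 0 := by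
    intro T
    simp [Finset.sum_ite_mem, Finset.univ_inter]
  calc ∑ T ∈ (Finset.univ : Finset (Fin n)).powerset, Wt η T * T.card
      = ∑ T ∈ (Finset.univ : Finset (Fin n)).powerset,
          ∑ i : Fin n, (if i ∈ T then Wt η T else 0) := by
        refine Finset.sum_congr rfl fun T _ => ?_
        rw [hcard, Finset.mul_sum]
        exact Finset.sum_congr rfl fun i _ => by split <;> simp
    _ = ∑ i : Fin n, ∑ T ∈ (Finset.univ : Finset (Fin n)).powerset,
          (if i ∈ T then Wt η T else 0) := Finset.sum_comm
    _ = ∑ i, η i := by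
        refine Finset.sum_congr rfl fun i _ => ?_
        have := marginal η {i}
        simp only [Finset.singleton_subset_iff, Finset.prod_singleton] at this
        rw [← this, Finset.sum_filter]

lemma esymm_eq_Wt {n m : ℕ} (η : Fin n → ℝ) :
    ∑ α ∈ Finset.powersetCard m (Finset.univ : Finset (Fin n)), ∏ i ∈ α, η i
      = ∑ T ∈ (Finset.univ : Finset (Fin n)).powerset, Wt η T * (T.card.choose m : ℝ) := by
  calc ∑ α ∈ Finset.powersetCard m (Finset.univ : Finset (Fin n)), ∏ i ∈ α, η i
      = ∑ α ∈ Finset.powersetCard m (Finset.univ : Finset (Fin n)),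
          ∑ T ∈ (Finset.univ : Finset (Fin n)).powerset, (if α ⊆ T then Wt η T else 0) := by
        refine Finset.sum_congr rfl fun α _ => ?_
        rw [← marginal η α, Finset.sum_filter]
    _ = ∑ T ∈ (Finset.univ : Finset (Fin n)).powerset,
          ∑ α ∈ Finset.powersetCard m (Finset.univ : Finset (Fin n)),
            (if α ⊆ T then Wt η T else 0) := Finset.sum_comm
    _ = ∑ T ∈ (Finset.univ : Finset (Fin n)).powerset, Wt η T * (T.card.choose m : ℝ) := by
        refine Finset.sum_congr rfl fun T _ => ?_
        rw [← Finset.sum_filter]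
        have hfil : (Finset.powersetCard m (Finset.univ : Finset (Fin n))).filter
            (fun α => α ⊆ T) = T.powersetCard m := by
          ext α
          simp only [mem_filter, Finset.mem_powersetCard]
          constructor
          · rintro ⟨⟨-, hc⟩, hs⟩; exact ⟨hs, hc⟩
          · rintro ⟨hs, hc⟩; exact ⟨⟨subset_univ _, hc⟩, hs⟩
        rw [hfil, Finset.sum_const, Finset.card_powersetCard, nsmul_eq_mul, mul_comm]

lemma tangA (k m : ℕ) : ∀ j, k ≤ j → k.choose (m+1) + (j - k) * k.choose m ≤ j.choose (m+1) := by
  intro j hj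
  induction j, hj using Nat.le_induction with
  | base => simp
  | succ j hj ih =>
      have h1 : k.choose m ≤ j.choose m := Nat.choose_le_choose m hj
      have : j + 1 - k = (j - k) + 1 := by omega
      rw [this, Nat.succ_mul, Nat.choose_succ_succ']
      omega

lemma tangB (k m : ℕ) : ∀ d, d ≤ k → k.choose (m+1) ≤ (k - d).choose (m+1) + d * k.choose m := by
  intro d
  induction d with
  | zero => simp
  | succ d ih =>
      intro hd
      have ihd := ih (by omega)
      have hstep : (k - d).choose (m+1) ≤ (k - (d+1)).choose (m+1) + k.choose m := by
        have h2 : k - d = (k - (d+1)) + 1 := by omega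
        rw [h2, Nat.choose_succ_succ']
        have : (k - (d+1)).choose m ≤ k.choose m := Nat.choose_le_choose m (by omega)
        omega
      rw [Nat.succ_mul]
      omega

lemma tangent (k m j : ℕ) :
    (k.choose (m+1) : ℝ) + (k.choose m : ℝ) * ((j : ℝ) - (k : ℝ)) ≤ (j.choose (m+1) : ℝ) := by
  rcases le_total k j with h | h
  · have := tangA k m j h
    have hc : ((j - k : ℕ) : ℝ) = (j : ℝ) - k := by rw [Nat.cast_sub h]
    calc (k.choose (m+1) : ℝ) + (k.choose m : ℝ) * ((j : ℝ) - (k : ℝ))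
        = ((k.choose (m+1) + (j - k) * k.choose m : ℕ) : ℝ) := by push_cast [hc]; ring
      _ ≤ _ := by exact_mod_cast this
  · have := tangB k m (k - j) (by omega)
    have hkj : k - (k - j) = j := by omega
    rw [hkj] at this
    have hc : ((k - j : ℕ) : ℝ) = (k : ℝ) - j := by rw [Nat.cast_sub h]
    have : (k.choose (m+1) : ℝ) ≤ (j.choose (m+1) : ℝ) + ((k:ℝ) - j) * k.choose m := by
      rw [← hc]; exact_mod_cast this
    linarith

/-- For `η ∈ [0,1]ⁿ` with `∑ᵢ ηᵢ = k` (`k` a positive integer) and `m ≤ k`,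
`e_m(η) ≥ (k choose m)`, with equality when exactly `k` of the `ηᵢ` equal `1`
and the rest are `0`. -/
theorem esymm_lower_bound (n k m : ℕ) (hk : 0 < k) (hm : m ≤ k)
    (η : Fin n → ℝ) (h0 : ∀ i, 0 ≤ η i) (h1 : ∀ i, η i ≤ 1)
    (hsum : ∑ i, η i = (k : ℝ)) :
    (k.choose m : ℝ) ≤
      ∑ α ∈ Finset.powersetCard m (Finset.univ : Finset (Fin n)), ∏ i ∈ α, η i ∧
    (∀ S : Finset (Fin n), S.card = k → (∀ i, η i = if i ∈ S then 1 else 0) →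
      ∑ α ∈ Finset.powersetCard m (Finset.univ : Finset (Fin n)), ∏ i ∈ α, η i
        = (k.choose m : ℝ)) := by
  constructor
  · -- the lower bound
    have hWnn : ∀ T : Finset (Fin n), 0 ≤ Wt η T := by
      intro T
      exact mul_nonneg (Finset.prod_nonneg fun i _ => h0 i)
        (Finset.prod_nonneg fun i _ => by linarith [h1 i])
    rw [esymm_eq_Wt]
    rcases Nat.eq_zero_or_pos m with rfl | hm0
    · simp only [Nat.choose_zero_right, Nat.cast_one, mul_one]
      rw [Wt_norm η]
    · obtain ⟨m', rfl⟩ : ∃ m', m = m' + 1 := ⟨m - 1, by omega⟩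
      have step : ∀ T ∈ (Finset.univ : Finset (Fin n)).powerset,
          Wt η T * ((k.choose (m'+1) : ℝ) + (k.choose m' : ℝ) * ((T.card : ℝ) - k))
            ≤ Wt η T * (T.card.choose (m'+1) : ℝ) := fun T _ =>
        mul_le_mul_of_nonneg_left (tangent k m' T.card) (hWnn T)
      calc (k.choose (m'+1) : ℝ)
          = ∑ T ∈ (Finset.univ : Finset (Fin n)).powerset,
              Wt η T * ((k.choose (m'+1) : ℝ) + (k.choose m' : ℝ) * ((T.card : ℝ) - k)) := by
            have e1 := Wt_norm η
            have e2 := Wt_moment η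
            rw [hsum] at e2
            have : ∑ T ∈ (Finset.univ : Finset (Fin n)).powerset,
                Wt η T * ((k.choose (m'+1) : ℝ) + (k.choose m' : ℝ) * ((T.card : ℝ) - k))
                = (k.choose (m'+1) : ℝ) * (∑ T ∈ (Finset.univ : Finset (Fin n)).powerset, Wt η T)
                  + (k.choose m' : ℝ) *
                    ((∑ T ∈ (Finset.univ : Finset (Fin n)).powerset, Wt η T * T.card)
                      - (k : ℝ) * ∑ T ∈ (Finset.univ : Finset (Fin n)).powerset, Wt η T) := by
              rw [Finset.mul_sum, Finset.mul_sum, ← Finset.sum_sub_distrib, Finset.mul_sum,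
                ← Finset.sum_add_distrib]
              exact Finset.sum_congr rfl fun T _ => by ring
            rw [this, e1, e2]
            ring
        _ ≤ _ := Finset.sum_le_sum step
  · -- the equality case
    intro S hScard hind
    have hprod : ∀ α : Finset (Fin n), (∏ i ∈ α, η i) = if α ⊆ S then (1:ℝ) else 0 := by
      intro α
      by_cases h : α ⊆ S
      · rw [if_pos h]
        refine Finset.prod_eq_one fun i hi => ?_
        rw [hind i, if_pos (h hi)]
      · rw [if_neg h]
        obtain ⟨i, hiα, hiS⟩ := Finset.not_subset.mp h
        exact Finset.prod_eq_zero hiα (by rw [hind i, if_neg hiS])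
    rw [Finset.sum_congr rfl fun α _ => hprod α, Finset.sum_boole]
    have hfil : (Finset.powersetCard m (Finset.univ : Finset (Fin n))).filter
        (fun α => α ⊆ S) = S.powersetCard m := by
      ext α
      simp only [mem_filter, Finset.mem_powersetCard]
      constructor
      · rintro ⟨⟨-, hc⟩, hs⟩; exact ⟨hs, hc⟩
      · rintro ⟨hs, hc⟩; exact ⟨⟨subset_univ _, hc⟩, hs⟩
    rw [hfil, Finset.card_powersetCard, hScard]
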